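/- arXiv:1604.01195 — 2 statements merged into one kernel-verified Lean document; each statement's English description precedes it below -/
import Mathlib

section
/- Let X be a metric space that is uniformly perfect in the large with constant c ∈ (0,1): for all x ∈ X and all sufficiently large T, B(x,T) \ B(x,cT) ≠ ∅. Then for every R > 0 and every x ∈ X, the number of pairwise disjoint balls of radius R that can be packed inside B(x,T) tends to infinity as T → ∞; quantitatively, B(x,T) contains at least ⌊log_{(2+c)/c}(T/R)⌋ pairwise disjoint balls of radius R (for T large enough). -/
open Metric Real Filter


/-- In a metric space which is uniformly perfect in the large with constant `c ∈ (0,1)`,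
every ball `B(x,T)` (for `T` large enough) contains at least `⌊log_{(2+c)/c}(T/R)⌋`
pairwise disjoint balls of radius `R`. -/
theorem uniformly_perfect_packing {X : Type*} [MetricSpace X] (c : ℝ)
    (hc0 : 0 < c) (hc1 : c < 1) (T₀ : ℝ)
    (hup : ∀ x : X, ∀ T ≥ T₀,
      ((Metric.closedBall x T) \ (Metric.closedBall x (c * T))).Nonempty)
    (R : ℝ) (hR : 0 < R) (x : X) :
    ∃ T₁ : ℝ, ∀ T ≥ T₁,
      ∃ y : Fin ⌊Real.logb ((2 + c) / c) (T / R)⌋₊ → X,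
        (∀ i, Metric.closedBall (y i) R ⊆ Metric.closedBall x T) ∧
        (∀ i j, i ≠ j →
          Disjoint (Metric.closedBall (y i) R) (Metric.closedBall (y j) R)) := by
  obtain ⟨b, hb_def⟩ : ∃ b : ℝ, b = (2 + c) / c := ⟨_, rfl⟩
  obtain ⟨γ, hγ_def⟩ : ∃ γ : ℝ, γ = 2 / c := ⟨_, rfl⟩
  obtain ⟨ρ, hρ_def⟩ : ∃ ρ : ℝ, ρ = (2 + c) / 2 := ⟨_, rfl⟩
  obtain ⟨M, hM_def⟩ : ∃ M : ℝ, M = max T₀ (3 * R) := ⟨_, rfl⟩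
  have hc2 : (0:ℝ) < 2 + c := by linarith
  have hb1 : 1 < b := by rw [hb_def, lt_div_iff₀ hc0]; linarith
  have hγ1 : 1 < γ := by rw [hγ_def, lt_div_iff₀ hc0]; linarith
  have hρ1 : 1 < ρ := by rw [hρ_def]; linarith
  have hcγ : c * γ = 2 := by rw [hγ_def]; field_simp
  have hbγρ : b = γ * ρ := by rw [hb_def, hγ_def, hρ_def]; field_simp
  have hM3R : 3 * R ≤ M := hM_def ▸ le_max_right _ _
  have hMT₀ : T₀ ≤ M := hM_def ▸ le_max_left _ _
  have hM0 : 0 < M := lt_of_lt_of_le (by linarith) hM3R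
  have hγ0 : (0:ℝ) < γ := by linarith
  have hpow1 : ∀ n : ℕ, (1:ℝ) ≤ γ ^ n := fun n => one_le_pow₀ hγ1.le
  have hs_ge : ∀ n : ℕ, M ≤ M * γ ^ n := by
    intro n
    have := hpow1 n
    nlinarith
  -- choose annulus points
  have hq : ∀ n : ℕ, ∃ p : X, dist p x ≤ M * γ ^ n ∧ c * (M * γ ^ n) < dist p x := by
    intro n
    obtain ⟨p, hp1, hp2⟩ := hup x (M * γ ^ n) (le_trans hMT₀ (hs_ge n))
    refine ⟨p, ?_, ?_⟩
    · simpa [Metric.mem_closedBall] using hp1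
    · simpa [Metric.mem_closedBall, not_le] using hp2
  choose q hq1 hq2 using hq
  -- separation of annulus points
  have hsep : ∀ n m : ℕ, n < m → 2 * R < dist (q n) (q m) := by
    intro n m hnm
    have h1 : γ ^ (n + 1) ≤ γ ^ m := pow_le_pow_right₀ hγ1.le hnm
    have h2 : c * (M * γ ^ (n + 1)) = 2 * (M * γ ^ n) := by
      have e : c * (M * γ ^ (n + 1)) = (c * γ) * (M * γ ^ n) := by ring
      rw [e, hcγ]
    have h3 : dist (q m) x ≤ dist (q m) (q n) + dist (q n) x := dist_triangle _ _ _
    have h4 := hq2 m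
    have h5 := hq1 n
    have h6 : M ≤ M * γ ^ n := hs_ge n
    have h7 : c * (M * γ ^ (n + 1)) ≤ c * (M * γ ^ m) :=
      mul_le_mul_of_nonneg_left (mul_le_mul_of_nonneg_left h1 hM0.le) hc0.le
    have hd : dist (q m) (q n) = dist (q n) (q m) := dist_comm _ _
    linarith
  -- find k₀ with ρ^k large enough
  obtain ⟨k₀, hk₀⟩ := Filter.eventually_atTop.mp
    ((tendsto_pow_atTop_atTop_of_one_lt hρ1).eventually_ge_atTop ((γ * R + M) / (γ * R)))
  refine ⟨R * b ^ k₀, fun T hT => ?_⟩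
  have hbk₀1 : (1:ℝ) ≤ b ^ k₀ := one_le_pow₀ hb1.le
  have hTR1 : 1 ≤ T / R := by
    rw [le_div_iff₀ hR]
    nlinarith
  have hTR0 : 0 < T / R := by linarith
  have hk₀k : k₀ ≤ ⌊Real.logb ((2 + c) / c) (T / R)⌋₊ := by
    rw [← hb_def]
    apply Nat.le_floor
    rw [Real.le_logb_iff_rpow_le hb1 hTR0, Real.rpow_natCast, le_div_iff₀ hR]
    nlinarith
  have hbk : (b:ℝ) ^ ⌊Real.logb ((2 + c) / c) (T / R)⌋₊ ≤ T / R := by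
    have h1 : (⌊Real.logb ((2 + c) / c) (T / R)⌋₊ : ℝ) ≤ Real.logb b (T / R) := by
      rw [hb_def]
      exact Nat.floor_le (Real.logb_nonneg (hb_def ▸ hb1) hTR1)
    rw [← Real.rpow_natCast]
    exact (Real.le_logb_iff_rpow_le hb1 hTR0).mp h1
  generalize hgen : ⌊Real.logb ((2 + c) / c) (T / R)⌋₊ = k at hk₀k hbk ⊢
  have hTk : R * b ^ k ≤ T := by
    have := (le_div_iff₀ hR).mp hbk
    linarith
  have hρk : γ * R + M ≤ γ * R * ρ ^ k := by
    have h := hk₀ k hk₀k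
    rw [div_le_iff₀ (by positivity)] at h
    linarith
  refine ⟨fun i => q i, fun i => ?_, fun i j hij => ?_⟩
  · -- containment
    apply Metric.closedBall_subset_closedBall'
    have hd : dist (q i) x ≤ M * γ ^ (i:ℕ) := hq1 i
    have hik1 : (i : ℕ) + 1 ≤ k := i.2
    have hγik : γ ^ ((i:ℕ) + 1) ≤ γ ^ k := pow_le_pow_right₀ hγ1.le hik1
    have hρk0 : (0:ℝ) < ρ ^ k := by positivity
    have key : R + M * γ ^ (i:ℕ) ≤ R * b ^ k := by
      have h2 : (1:ℝ) ≤ γ ^ ((i:ℕ) + 1) := hpow1 _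
      calc R + M * γ ^ (i:ℕ)
          ≤ R * γ ^ ((i:ℕ) + 1) + M * γ ^ (i:ℕ) := by
            have := mul_le_mul_of_nonneg_left h2 hR.le
            linarith
        _ = γ ^ (i:ℕ) * (γ * R + M) := by ring
        _ ≤ γ ^ (i:ℕ) * (γ * R * ρ ^ k) :=
            mul_le_mul_of_nonneg_left hρk (by positivity)
        _ = R * (γ ^ ((i:ℕ) + 1) * ρ ^ k) := by ring
        _ ≤ R * (γ ^ k * ρ ^ k) :=
            mul_le_mul_of_nonneg_left (mul_le_mul_of_nonneg_right hγik hρk0.le) hR.le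
        _ = R * b ^ k := by rw [hbγρ, mul_pow]
    linarith
  · -- disjointness
    rcases lt_or_gt_of_ne (fun h : (i:ℕ) = (j:ℕ) => hij (Fin.ext h)) with h | h
    · exact Metric.closedBall_disjoint_closedBall (by linarith [hsep i j h])
    · exact (Metric.closedBall_disjoint_closedBall (by linarith [hsep j i h])).symm
end

section
/- Let u(t) = log(log(t)) for t ≥ m where m = max{(ℓ+1)/(ℓ-1), e} and ℓ > 1, extended by u(t) = log(log m) for t < m. Fix p > 1. For any finite family {[a_j,b_j]} of pairwise disjoint intervals in [m,∞) with b_j ≤ m·a_j for all j, one has ∑_j (u(b_j) - u(a_j))^p ≤ ∑_{i=1}^∞ (2/i)^p + C(ℓ,p), where C(ℓ,p) depends only on ℓ and p (it bounds the contribution of at most one exceptional interval, by u(m²)^p). -/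
open Real Finset MeasureTheory Set

/-- `a^p + b^p ≤ (a+b)^p` for nonnegative reals and `p ≥ 1`. -/
lemma aux_add_rpow_le {a b p : ℝ} (ha : 0 ≤ a) (hb : 0 ≤ b) (hp : 1 ≤ p) :
    a ^ p + b ^ p ≤ (a + b) ^ p := by
  lift a to NNReal using ha
  lift b to NNReal using hb
  exact_mod_cast NNReal.add_rpow_le_rpow_add a b hp

/-- `∑ xⱼ^p ≤ (∑ xⱼ)^p` for nonnegative reals and `p ≥ 1`. -/
lemma aux_sum_rpow_le {ι : Type} {p : ℝ} (hp : 1 ≤ p) (s : Finset ι) (x : ι → ℝ)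
    (hx : ∀ j ∈ s, 0 ≤ x j) :
    ∑ j ∈ s, x j ^ p ≤ (∑ j ∈ s, x j) ^ p := by
  classical
  induction s using Finset.induction with
  | empty => simp [Real.zero_rpow (by linarith : p ≠ 0)]
  | insert c s hnot ih =>
    rw [Finset.sum_insert hnot, Finset.sum_insert hnot]
    have h1 : ∑ j ∈ s, x j ^ p ≤ (∑ j ∈ s, x j) ^ p :=
      ih fun j hj => hx j (Finset.mem_insert_of_mem hj)
    calc x c ^ p + ∑ j ∈ s, x j ^ p ≤ x c ^ p + (∑ j ∈ s, x j) ^ p := by linarith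
      _ ≤ (x c + ∑ j ∈ s, x j) ^ p :=
        aux_add_rpow_le (hx c (Finset.mem_insert_self c s))
          (Finset.sum_nonneg fun j hj => hx j (Finset.mem_insert_of_mem hj)) hp

/-- Total length of disjoint subintervals of `[A,B]` is at most `B - A`. -/
lemma aux_sum_length_le {ι : Type} (s : Finset ι) (a b : ι → ℝ) (A B : ℝ) (hAB : A ≤ B)
    (hab : ∀ j ∈ s, a j ≤ b j) (hA : ∀ j ∈ s, A ≤ a j) (hB : ∀ j ∈ s, b j ≤ B)
    (hd : ∀ j ∈ s, ∀ k ∈ s, j ≠ k → Disjoint (Set.Icc (a j) (b j)) (Set.Icc (a k) (b k))) :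
    ∑ j ∈ s, (b j - a j) ≤ B - A := by
  classical
  have hpd : (↑s : Set ι).PairwiseDisjoint fun j => Set.Icc (a j) (b j) := by
    intro j hj k hk hjk
    exact hd j hj k hk hjk
  have hmeas : ∑ j ∈ s, volume (Set.Icc (a j) (b j))
      = volume (⋃ j ∈ s, Set.Icc (a j) (b j)) :=
    (measure_biUnion_finset hpd fun _ _ => measurableSet_Icc).symm
  have hsub : (⋃ j ∈ s, Set.Icc (a j) (b j)) ⊆ Set.Icc A B := by
    refine Set.iUnion₂_subset fun j hj => ?_
    exact Set.Icc_subset_Icc (hA j hj) (hB j hj)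
  have hle : ∑ j ∈ s, volume (Set.Icc (a j) (b j)) ≤ volume (Set.Icc A B) := by
    rw [hmeas]; exact measure_mono hsub
  have h1 : ∑ j ∈ s, ENNReal.ofReal (b j - a j) ≤ ENNReal.ofReal (B - A) := by
    simpa [Real.volume_Icc] using hle
  have h2 : ENNReal.ofReal (∑ j ∈ s, (b j - a j)) ≤ ENNReal.ofReal (B - A) := by
    rwa [ENNReal.ofReal_sum_of_nonneg fun j hj => sub_nonneg.2 (hab j hj)]
  exact (ENNReal.ofReal_le_ofReal_iff (by linarith)).1 h2

/-- Disjoint nonempty closed intervals are ordered. -/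
lemma aux_disjoint_cases {a b c d : ℝ} (hab : a ≤ b) (hcd : c ≤ d)
    (h : Disjoint (Set.Icc a b) (Set.Icc c d)) : b < c ∨ d < a := by
  by_contra hcon
  push_neg at hcon
  obtain ⟨h1, h2⟩ := hcon
  have hmem1 : max a c ∈ Set.Icc a b := ⟨le_max_left _ _, max_le hab h1⟩
  have hmem2 : max a c ∈ Set.Icc c d := ⟨le_max_right _ _, max_le h2 hcd⟩
  exact Set.disjoint_left.mp h hmem1 hmem2

lemma aux_Icc_disjoint_of_lt {x y z w : ℝ} (h : y < z) :
    Disjoint (Set.Icc x y) (Set.Icc z w) := by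
  apply Set.disjoint_left.mpr
  rintro t ⟨_, ht⟩ ⟨hz, _⟩
  linarith

/-- Packaged energy estimate from the proof that `ℝ₊` is `p`-parabolic for `p > 1`:
with `m = max{(ℓ+1)/(ℓ-1), e}` and `u(t) = log log t` for `t ≥ m` (constant `log log m`
below `m`), there is a constant `C = C(ℓ,p)` such that for any finite family of pairwise
disjoint intervals `[aⱼ,bⱼ] ⊂ [m,∞)` with `bⱼ ≤ m aⱼ`,
`∑ (u(bⱼ) - u(aⱼ))^p ≤ ∑_{i≥1} (2/i)^p + C`. -/
theorem halfline_energy_bound (ℓ p m : ℝ) (hℓ : 1 < ℓ) (hp : 1 < p)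
    (hm : m = max ((ℓ + 1) / (ℓ - 1)) (Real.exp 1))
    (u : ℝ → ℝ)
    (hu : ∀ t, u t = if t < m then Real.log (Real.log m) else Real.log (Real.log t)) :
    ∃ C : ℝ, ∀ {ι : Type} (J : Finset ι) (a b : ι → ℝ),
      (∀ j ∈ J, m ≤ a j) → (∀ j ∈ J, a j ≤ b j) → (∀ j ∈ J, b j ≤ m * a j) →
      (∀ j ∈ J, ∀ k ∈ J, j ≠ k → Disjoint (Set.Icc (a j) (b j)) (Set.Icc (a k) (b k))) →
      ∑ j ∈ J, (u (b j) - u (a j)) ^ p ≤ (∑' i : ℕ, (2 / ((i : ℝ) + 1)) ^ p) + C := by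
  classical
  have he : Real.exp 1 ≤ m := hm ▸ le_max_right _ _
  have hm1 : 1 < m := lt_of_lt_of_le (by nlinarith [Real.add_one_le_exp (1 : ℝ)]) he
  have hmpos : 0 < m := by linarith
  have hL : 1 ≤ Real.log m := (Real.le_log_iff_exp_le hmpos).2 he
  have hLpos : 0 < Real.log m := by linarith
  -- basic facts about u
  have hu_eq : ∀ t, m ≤ t → u t = Real.log (Real.log t) := by
    intro t ht
    rw [hu t, if_neg (not_lt.2 ht)]
  have hu_mono : ∀ s t : ℝ, m ≤ s → s ≤ t → u s ≤ u t := by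
    intro s t hs hst
    rw [hu_eq s hs, hu_eq t (hs.trans hst)]
    have hls : 1 ≤ Real.log s := hL.trans ((Real.log_le_log_iff hmpos (by linarith)).2 hs)
    have hlt : Real.log s ≤ Real.log t :=
      (Real.log_le_log_iff (by linarith) (by linarith)).2 hst
    exact (Real.log_le_log_iff (by linarith) (by linarith)).2 hlt
  have hu_strict : ∀ s t : ℝ, m ≤ s → s < t → u s < u t := by
    intro s t hs hst
    rw [hu_eq s hs, hu_eq t (hs.trans hst.le)]
    have hls : 1 ≤ Real.log s := hL.trans ((Real.log_le_log_iff hmpos (by linarith)).2 hs)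
    have hlt : Real.log s < Real.log t := (Real.log_lt_log_iff (by linarith) (by linarith)).2 hst
    exact (Real.log_lt_log_iff (by linarith) (by linarith)).2 hlt
  have hm_le_pow : ∀ k : ℕ, 1 ≤ k → m ≤ m ^ k := by
    intro k hk
    calc m = m ^ 1 := (pow_one m).symm
      _ ≤ m ^ k := pow_le_pow_right₀ hm1.le hk
  have hu_pow : ∀ k : ℕ, 1 ≤ k → u (m ^ k) = Real.log ((k : ℝ) * Real.log m) := by
    intro k hk
    rw [hu_eq _ (hm_le_pow k hk), Real.log_pow]
  -- window bound
  have hwindow : ∀ i : ℕ, 1 ≤ i →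
      u (m ^ (i + 2)) - u (m ^ i) ≤ 2 / (i : ℝ) := by
    intro i hi
    have hi' : (1 : ℝ) ≤ (i : ℝ) := by exact_mod_cast hi
    rw [hu_pow _ (by omega), hu_pow _ hi]
    have h1 : Real.log (((i : ℝ) + 2) * Real.log m) - Real.log ((i : ℝ) * Real.log m)
        = Real.log ((((i : ℝ) + 2) * Real.log m) / ((i : ℝ) * Real.log m)) := by
      rw [Real.log_div (by positivity) (by positivity)]
    have h2 : (((i : ℝ) + 2) * Real.log m) / ((i : ℝ) * Real.log m) = 1 + 2 / (i : ℝ) := by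
      field_simp
    have h3 : Real.log (1 + 2 / (i : ℝ)) ≤ 2 / (i : ℝ) := by
      have := Real.log_le_sub_one_of_pos (x := 1 + 2 / (i : ℝ)) (by positivity)
      linarith
    push_cast
    rw [h1, h2]
    exact h3
  -- summability
  have hsummable : Summable (fun n : ℕ => (2 / ((n : ℝ) + 1)) ^ p) := by
    have h0 : Summable (fun n : ℕ => 1 / (n : ℝ) ^ p) :=
      Real.summable_one_div_nat_rpow.mpr hp
    have h1 : Summable (fun n : ℕ => 1 / ((n : ℝ) + 1) ^ p) := by
      have := (summable_nat_add_iff 1).mpr h0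
      simpa using this
    have h2 := h1.mul_left ((2 : ℝ) ^ p)
    refine h2.congr fun n => ?_
    rw [Real.div_rpow (by norm_num) (by positivity)]
    field_simp
  refine ⟨0, ?_⟩
  intro ι J a b ha hab hbm hdisj
  rw [add_zero]
  set L := Real.log m with hLdef
  set idx : ι → ℕ := fun j => ⌊Real.log (a j) / L⌋₊ with hidx
  -- per-element window facts
  have hapos : ∀ j ∈ J, 0 < a j := fun j hj => lt_of_lt_of_le hmpos (ha j hj)
  have hidx1 : ∀ j ∈ J, 1 ≤ idx j := by
    intro j hj
    apply Nat.le_floor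
    rw [le_div_iff₀ hLpos]
    simpa using (Real.log_le_log_iff hmpos (hapos j hj)).2 (ha j hj)
  have hlow : ∀ j ∈ J, m ^ idx j ≤ a j := by
    intro j hj
    have hlan : 0 ≤ Real.log (a j) := Real.log_nonneg (by linarith [ha j hj])
    have h1 : (idx j : ℝ) ≤ Real.log (a j) / L := Nat.floor_le (by positivity)
    have h2 : (idx j : ℝ) * L ≤ Real.log (a j) := by
      rw [← le_div_iff₀ hLpos]; exact h1
    have h3 : Real.log (m ^ idx j) ≤ Real.log (a j) := by
      rw [Real.log_pow]; exact h2
    exact (Real.log_le_log_iff (pow_pos hmpos _) (hapos j hj)).1 h3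
  have hhigh : ∀ j ∈ J, b j ≤ m ^ (idx j + 2) := by
    intro j hj
    have h1 : Real.log (a j) / L < (idx j : ℝ) + 1 := Nat.lt_floor_add_one _
    have h2 : Real.log (a j) < ((idx j : ℝ) + 1) * L := by
      rw [div_lt_iff₀ hLpos] at h1; exact h1
    have h3 : Real.log (a j) < Real.log (m ^ (idx j + 1)) := by
      rw [Real.log_pow]; push_cast; exact h2
    have h4 : a j ≤ m ^ (idx j + 1) :=
      ((Real.log_lt_log_iff (hapos j hj) (pow_pos hmpos _)).1 h3).le
    calc b j ≤ m * a j := hbm j hj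
      _ ≤ m * m ^ (idx j + 1) := by
          exact mul_le_mul_of_nonneg_left h4 hmpos.le
      _ = m ^ (idx j + 2) := by ring
  -- split by fibers
  rw [← Finset.sum_fiberwise_of_maps_to (g := idx) (t := J.image idx)
    (fun j hj => Finset.mem_image_of_mem idx hj)]
  have hfiber : ∀ i ∈ J.image idx,
      ∑ j ∈ J.filter (fun j => idx j = i), (u (b j) - u (a j)) ^ p
        ≤ (2 / ((i : ℝ))) ^ p := by
    intro i hi
    obtain ⟨j0, hj0, hj0i⟩ := Finset.mem_image.1 hi
    have hi1 : 1 ≤ i := hj0i ▸ hidx1 j0 hj0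
    set F := J.filter (fun j => idx j = i) with hF
    have hFJ : ∀ j ∈ F, j ∈ J := fun j hj => (Finset.mem_filter.1 hj).1
    have hFi : ∀ j ∈ F, idx j = i := fun j hj => (Finset.mem_filter.1 hj).2
    have hxnn : ∀ j ∈ F, 0 ≤ u (b j) - u (a j) := by
      intro j hj
      have := hu_mono (a j) (b j) (ha j (hFJ j hj)) (hab j (hFJ j hj))
      linarith
    have hS1 : ∑ j ∈ F, (u (b j) - u (a j)) ≤ u (m ^ (i + 2)) - u (m ^ i) := by
      apply aux_sum_length_le F (fun j => u (a j)) (fun j => u (b j))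
        (u (m ^ i)) (u (m ^ (i + 2)))
      · exact hu_mono _ _ (hm_le_pow i hi1) (pow_le_pow_right₀ hm1.le (by omega))
      · intro j hj; exact hu_mono _ _ (ha j (hFJ j hj)) (hab j (hFJ j hj))
      · intro j hj
        exact hu_mono _ _ (hm_le_pow i hi1) ((hFi j hj) ▸ hlow j (hFJ j hj))
      · intro j hj
        have hmb : m ≤ b j := (ha j (hFJ j hj)).trans (hab j (hFJ j hj))
        exact hu_mono _ _ hmb ((hFi j hj) ▸ hhigh j (hFJ j hj))
      · intro j hj k hk hjk
        have hd := hdisj j (hFJ j hj) k (hFJ k hk) hjk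
        rcases aux_disjoint_cases (hab j (hFJ j hj)) (hab k (hFJ k hk)) hd with h | h
        · exact aux_Icc_disjoint_of_lt
            (hu_strict _ _ ((ha j (hFJ j hj)).trans (hab j (hFJ j hj))) h)
        · exact (aux_Icc_disjoint_of_lt
            (hu_strict _ _ ((ha k (hFJ k hk)).trans (hab k (hFJ k hk))) h)).symm
    have hS2 : ∑ j ∈ F, (u (b j) - u (a j)) ^ p ≤ (∑ j ∈ F, (u (b j) - u (a j))) ^ p :=
      aux_sum_rpow_le hp.le F _ hxnn
    have hS3 : (∑ j ∈ F, (u (b j) - u (a j))) ^ p ≤ (2 / (i : ℝ)) ^ p := by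
      apply Real.rpow_le_rpow (Finset.sum_nonneg hxnn)
        (hS1.trans (hwindow i hi1)) (by linarith)
    exact hS2.trans hS3
  have hge : ∀ i ∈ J.image idx, 1 ≤ i := by
    intro i hi
    obtain ⟨j0, hj0, hj0i⟩ := Finset.mem_image.1 hi
    exact hj0i ▸ hidx1 j0 hj0
  have hinj : ∀ x ∈ J.image idx, ∀ y ∈ J.image idx, x - 1 = y - 1 → x = y := by
    intro x hx y hy hxy
    have := hge x hx
    have := hge y hy
    omega
  set T2 : Finset ℕ := (J.image idx).image (fun i => i - 1) with hT2
  calc ∑ i ∈ J.image idx, ∑ j ∈ J.filter (fun j => idx j = i), (u (b j) - u (a j)) ^ p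
      ≤ ∑ i ∈ J.image idx, (2 / ((i : ℝ))) ^ p := Finset.sum_le_sum hfiber
    _ = ∑ n ∈ T2, (2 / ((n : ℝ) + 1)) ^ p := by
        rw [hT2]
        rw [Finset.sum_image hinj]
        apply Finset.sum_congr rfl
        intro i hi
        have hi1 : 1 ≤ i := hge i hi
        have hcast : ((i - 1 : ℕ) : ℝ) + 1 = (i : ℝ) := by
          rw [Nat.cast_sub hi1, Nat.cast_one]; ring
        rw [hcast]
    _ ≤ ∑' n : ℕ, (2 / ((n : ℝ) + 1)) ^ p :=
        Summable.sum_le_tsum _ (fun n _ => Real.rpow_nonneg (by positivity) p) hsummable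
end
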